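/- arXiv:2506.22526 — 3 statements merged into one kernel-verified Lean document; each statement's English description precedes it below -/
import Mathlib

section
/- Let p ∈ (0,1] and let g₁, g₂ be independent random variables on ℕ, each distributed according to the geometric distribution with parameter p (i.e., P(gⱼ = k) = p·(1−p)^k for k ∈ ℕ). Then for every integer k ∈ ℤ, the difference z = g₁ − g₂ satisfies P(z = k) = (p/(2−p))·(1−p)^{|k|}. -/
open MeasureTheory ProbabilityTheory

lemma dg_aux
    {Ω : Type*} [MeasurableSpace Ω] (μ : Measure Ω) [IsProbabilityMeasure μ]
    (p : ℝ) (hp : p ∈ Set.Ioc (0 : ℝ) 1)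
    (g₁ g₂ : Ω → ℕ) (hg₁ : Measurable g₁) (hg₂ : Measurable g₂)
    (hindep : IndepFun g₁ g₂ μ)
    (hdist₁ : ∀ k : ℕ, μ {ω | g₁ ω = k} = ENNReal.ofReal (p * (1 - p) ^ k))
    (hdist₂ : ∀ k : ℕ, μ {ω | g₂ ω = k} = ENNReal.ofReal (p * (1 - p) ^ k))
    (a : ℕ) :
    μ {ω | (g₁ ω : ℤ) - (g₂ ω : ℤ) = (a : ℤ)} =
      ENNReal.ofReal ((p / (2 - p)) * (1 - p) ^ a) := by
  obtain ⟨hp0, hp1⟩ := hp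
  have h1p0 : 0 ≤ 1 - p := by linarith
  have h1p1 : 1 - p < 1 := by linarith
  have hset : {ω | (g₁ ω : ℤ) - (g₂ ω : ℤ) = (a : ℤ)} =
      ⋃ m : ℕ, (g₂ ⁻¹' {m} ∩ g₁ ⁻¹' {m + a}) := by
    ext ω
    simp only [Set.mem_setOf_eq, Set.mem_iUnion, Set.mem_inter_iff, Set.mem_preimage,
      Set.mem_singleton_iff]
    constructor
    · intro h
      exact ⟨g₂ ω, rfl, by omega⟩
    · rintro ⟨m, h1, h2⟩
      subst h1; rw [h2]; push_cast; ring
  rw [hset, measure_iUnion]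
  · have hterm : ∀ m : ℕ, μ (g₂ ⁻¹' {m} ∩ g₁ ⁻¹' {m + a})
        = ENNReal.ofReal ((p ^ 2 * (1 - p) ^ a) * ((1 - p) ^ 2) ^ m) := by
      intro m
      rw [Set.inter_comm,
        hindep.measure_inter_preimage_eq_mul _ _ (measurableSet_singleton _)
          (measurableSet_singleton _)]
      have e1 : g₁ ⁻¹' {m + a} = {ω | g₁ ω = m + a} := rfl
      have e2 : g₂ ⁻¹' {m} = {ω | g₂ ω = m} := rfl
      rw [e1, e2, hdist₁, hdist₂, ← ENNReal.ofReal_mul (by positivity)]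
      congr 1
      rw [← pow_mul, two_mul, pow_add, pow_add]; ring
    rw [tsum_congr hterm, ← ENNReal.ofReal_tsum_of_nonneg
        (fun m => by positivity)
        ((summable_geometric_of_lt_one (by positivity) (by nlinarith)).mul_left _)]
    congr 1
    rw [tsum_mul_left, tsum_geometric_of_lt_one (by positivity) (by nlinarith)]
    have h2p : 2 - p ≠ 0 := by linarith
    have hpne : p ≠ 0 := ne_of_gt hp0
    have he : 1 - (1 - p) ^ 2 = p * (2 - p) := by ring
    rw [he]
    field_simp
  · intro i j hij
    simp only [Function.onFun, Set.disjoint_left]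
    rintro ω ⟨h1, _⟩ ⟨h2, _⟩
    exact hij (h1.symm.trans h2)
  · exact fun m => ((hg₂ (measurableSet_singleton _)).inter
      (hg₁ (measurableSet_singleton _)))

/-- If `g₁, g₂` are independent geometric random variables with parameter `p ∈ (0,1]`,
then their difference is double-geometrically distributed. -/
theorem dg_of_diff_of_geometric
    {Ω : Type*} [MeasurableSpace Ω] (μ : Measure Ω) [IsProbabilityMeasure μ]
    (p : ℝ) (hp : p ∈ Set.Ioc (0 : ℝ) 1)
    (g₁ g₂ : Ω → ℕ) (hg₁ : Measurable g₁) (hg₂ : Measurable g₂)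
    (hindep : IndepFun g₁ g₂ μ)
    (hdist₁ : ∀ k : ℕ, μ {ω | g₁ ω = k} = ENNReal.ofReal (p * (1 - p) ^ k))
    (hdist₂ : ∀ k : ℕ, μ {ω | g₂ ω = k} = ENNReal.ofReal (p * (1 - p) ^ k))
    (k : ℤ) :
    μ {ω | (g₁ ω : ℤ) - (g₂ ω : ℤ) = k} =
      ENNReal.ofReal ((p / (2 - p)) * (1 - p) ^ k.natAbs) := by
  rcases le_or_gt 0 k with hk | hk
  · have : k = (k.natAbs : ℤ) := by omega
    rw [this]
    exact dg_aux μ p hp g₁ g₂ hg₁ hg₂ hindep hdist₁ hdist₂ k.natAbs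
  · have hset : {ω | (g₁ ω : ℤ) - (g₂ ω : ℤ) = k} =
        {ω | (g₂ ω : ℤ) - (g₁ ω : ℤ) = (k.natAbs : ℤ)} := by
      ext ω; simp only [Set.mem_setOf_eq]; omega
    rw [hset]
    exact dg_aux μ p hp g₂ g₁ hg₂ hg₁ hindep.symm hdist₂ hdist₁ k.natAbs
end

section
/- Fix p ∈ (0,1) and set s = 2(1−p)/(p(2−p)). Let q : ℤ → [0,∞) be any probability mass function on ℤ that is symmetric (q(k) = q(−k) for all k ∈ ℤ) and has mean absolute deviation ∑_{k∈ℤ} |k| q(k) = s. Then the Shannon entropy of q does not exceed that of the double geometric distribution with parameter p: −∑_{k∈ℤ} q(k) log q(k) ≤ −∑_{k∈ℤ} q_p(k) log q_p(k), where q_p(k) = (p/(2−p))·(1−p)^{|k|}. That is, the double geometric distribution is the maximum-entropy symmetric distribution on ℤ for a given mean absolute deviation. -/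
/-- The double geometric distribution is the maximum-entropy symmetric
distribution on `ℤ` for a given mean absolute deviation. -/
theorem dg_max_entropy (p : ℝ) (hp : p ∈ Set.Ioo (0 : ℝ) 1)
    (s : ℝ) (hs : s = 2 * (1 - p) / (p * (2 - p)))
    (q : ℤ → ℝ) (hq_nonneg : ∀ k, 0 ≤ q k)
    (hq_symm : ∀ k : ℤ, q k = q (-k))
    (hq_sum : ∑' k : ℤ, q k = 1)
    (hq_mad_summable : Summable fun k : ℤ => |(k : ℝ)| * q k)
    (hq_mad : ∑' k : ℤ, |(k : ℝ)| * q k = s) :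
    -∑' k : ℤ, q k * Real.log (q k) ≤
      -∑' k : ℤ,
          ((p / (2 - p)) * (1 - p) ^ k.natAbs) *
            Real.log ((p / (2 - p)) * (1 - p) ^ k.natAbs) := by
  obtain ⟨hp0, hp1⟩ := hp
  set c : ℝ := p / (2 - p) with hc
  set t : ℝ := 1 - p with ht
  have h2p : (0 : ℝ) < 2 - p := by linarith
  have ht0 : (0 : ℝ) < t := by simp [ht]; linarith
  have ht1 : t < 1 := by simp [ht]; linarith
  have hc0 : (0 : ℝ) < c := div_pos hp0 h2p
  have hc1 : c < 1 := (div_lt_one h2p).mpr (by linarith)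
  set r : ℤ → ℝ := fun k => c * t ^ k.natAbs with hr
  have hr_pos : ∀ k, 0 < r k := fun k => mul_pos hc0 (pow_pos ht0 _)
  have htnorm : ‖t‖ < 1 := by rw [Real.norm_eq_abs, abs_of_pos ht0]; exact ht1
  -- sum of r is 1
  have hgeo : HasSum (fun n : ℕ => c * t ^ n) (c / (1 - t)) :=
    (hasSum_geometric_of_lt_one ht0.le ht1).mul_left c
  have hnaN : ∀ n : ℕ, ((-((n : ℤ) + 1))).natAbs = n + 1 := by intro n; omega
  have hgeo1 : HasSum (fun n : ℕ => c * t ^ (n + 1)) (c * t / (1 - t)) := by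
    have h := (hasSum_geometric_of_lt_one ht0.le ht1).mul_left (c * t)
    convert h using 1
    · rfl
    · funext n; ring
    · rw [div_eq_mul_inv]
  have hr_sum : HasSum r 1 := by
    have := HasSum.of_nat_of_neg_add_one (f := r)
      (by simpa [hr] using hgeo) (by
        convert hgeo1 using 2 with n
        simp only [hr]; rw [hnaN n])
    convert this using 1
    have h1t : 1 - t = p := by simp [ht]
    rw [h1t, hc]
    field_simp
    ring
  -- sum of |k| * r k is s
  have habs : ∀ k : ℤ, |(k : ℝ)| = (k.natAbs : ℝ) := by
    intro k
    rw [Nat.cast_natAbs, Int.cast_abs]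
  have hmr1 : HasSum (fun n : ℕ => (n : ℝ) * (c * t ^ n)) (c * (t / (1 - t) ^ 2)) := by
    have := (hasSum_coe_mul_geometric_of_norm_lt_one htnorm).mul_left c
    convert this using 2 with n
    · rfl
    ring
  have hmr2 : HasSum (fun n : ℕ => ((n : ℝ) + 1) * (c * t ^ (n + 1))) (c * (t / (1 - t) ^ 2)) := by
    have h := hasSum_coe_mul_geometric_of_norm_lt_one htnorm
    have h' := (hasSum_nat_add_iff' 1).mpr h
    simp only [Finset.range_one, Finset.sum_singleton, Nat.cast_zero, zero_mul, pow_zero,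
      sub_zero] at h'
    have := h'.mul_left c
    convert this using 2 with n
    · rfl
    push_cast
    ring
  have hmad_r : HasSum (fun k : ℤ => |(k : ℝ)| * r k) s := by
    have := HasSum.of_nat_of_neg_add_one (f := fun k : ℤ => |(k : ℝ)| * r k)
      (by
        convert hmr1 using 2 with n
        show |((n : ℤ) : ℝ)| * (c * t ^ ((n : ℤ)).natAbs) = _
        rw [habs]
        simp) (by
        convert hmr2 using 2 with n
        show |((-((n : ℤ) + 1) : ℤ) : ℝ)| * (c * t ^ ((-((n : ℤ) + 1))).natAbs) = _
        rw [habs, hnaN n]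
        push_cast
        ring)
    convert this using 1
    have h1t : 1 - t = p := by simp [ht]
    rw [h1t, hs, hc, ht]
    field_simp
    ring
  -- r k * log (r k) rewrite
  have hlog_r : ∀ k : ℤ, Real.log (r k) = Real.log c + (k.natAbs : ℝ) * Real.log t := by
    intro k
    rw [hr, Real.log_mul hc0.ne' (pow_pos ht0 _).ne', Real.log_pow]
  -- RHS inner sum
  have hRHS : HasSum (fun k : ℤ => r k * Real.log (r k)) (Real.log c + s * Real.log t) := by
    have h1 := hr_sum.mul_right (Real.log c)
    have h2 := hmad_r.mul_right (Real.log t)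
    have := h1.add h2
    convert this using 2 with k
    · rfl
    · rw [hlog_r k, habs k]; ring
    · ring
  have hRHS_eq : ∑' k : ℤ, r k * Real.log (r k) = Real.log c + s * Real.log t := hRHS.tsum_eq
  have hs_nonneg : 0 ≤ s := by
    rw [hs]
    positivity
  have hlogc_nonpos : Real.log c ≤ 0 := Real.log_nonpos hc0.le hc1.le
  have hlogt_nonpos : Real.log t ≤ 0 := Real.log_nonpos ht0.le ht1.le
  show -∑' k : ℤ, q k * Real.log (q k) ≤ -∑' k : ℤ, r k * Real.log (r k)
  rw [hRHS_eq]
  by_cases hsum : Summable fun k : ℤ => q k * Real.log (q k)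
  · -- Gibbs' inequality
    have hq_summ : Summable q := by
      by_contra hns
      rw [tsum_eq_zero_of_not_summable hns] at hq_sum
      norm_num at hq_sum
    have hq_hsum : HasSum q 1 := hq_sum ▸ hq_summ.hasSum
    have hq_mad_hsum : HasSum (fun k : ℤ => |(k : ℝ)| * q k) s :=
      hq_mad ▸ hq_mad_summable.hasSum
    have hqlogr : HasSum (fun k : ℤ => q k * Real.log (r k)) (Real.log c + s * Real.log t) := by
      have h1 := hq_hsum.mul_right (Real.log c)
      have h2 := hq_mad_hsum.mul_right (Real.log t)
      have := h1.add h2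
      convert this using 2 with k
      · rfl
      · rw [hlog_r k, habs k]; ring
      · ring
    -- pointwise inequality
    have hpt : ∀ k : ℤ, q k - r k ≤ q k * Real.log (q k) - q k * Real.log (r k) := by
      intro k
      rcases eq_or_lt_of_le (hq_nonneg k) with h0 | hqk
      · rw [← h0]
        simp
        exact (hr_pos k).le
      · have hrq : 0 < r k / q k := div_pos (hr_pos k) hqk
        have := Real.log_le_sub_one_of_pos hrq
        rw [Real.log_div (hr_pos k).ne' hqk.ne'] at this
        have h2 := mul_le_mul_of_nonneg_left this hqk.le
        have h3 : q k * (r k / q k - 1) = r k - q k := by field_simp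
        rw [h3] at h2
        nlinarith [h2]
    have hdiff_summ : Summable fun k : ℤ => q k * Real.log (q k) - q k * Real.log (r k) :=
      hsum.sub hqlogr.summable
    have hqr_sum : HasSum (fun k : ℤ => q k - r k) 0 := by
      have := hq_hsum.sub hr_sum
      simpa using this
    have hle : (0 : ℝ) ≤ ∑' k : ℤ, (q k * Real.log (q k) - q k * Real.log (r k)) := by
      rw [← hqr_sum.tsum_eq]
      exact Summable.tsum_le_tsum hpt hqr_sum.summable hdiff_summ
    rw [Summable.tsum_sub hsum hqlogr.summable, hqlogr.tsum_eq] at hle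
    linarith
  · rw [tsum_eq_zero_of_not_summable hsum]
    have : Real.log c + s * Real.log t ≤ 0 := by nlinarith
    linarith
end

section
/- Let n be a positive integer and let A : ℝⁿ → ℝⁿ be a linear map that preserves the ℓ₁-norm, i.e., ‖Ax‖₁ = ‖x‖₁ for all x ∈ ℝⁿ. Then A is a signed coordinate permutation: there exist a permutation σ of {1,…,n} and signs ε ∈ {−1,+1}ⁿ such that A e_j = ε_j · e_{σ(j)} for every standard basis vector e_j. Hence the only ℓ₁-norm-preserving linear transformations are compositions of coordinate permutations and coordinate sign changes. -/
lemma l1_helper_zero (a b : ℝ) (h : |a+b| + |a-b| = 2*(|a|+|b|)) : a = 0 ∨ b = 0 := by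
  rcases abs_cases a with ⟨h1,_⟩|⟨h1,_⟩ <;> rcases abs_cases b with ⟨h2,_⟩|⟨h2,_⟩ <;>
    rcases abs_cases (a+b) with ⟨h3,_⟩|⟨h3,_⟩ <;> rcases abs_cases (a-b) with ⟨h4,_⟩|⟨h4,_⟩ <;>
    first | (left; linarith) | (right; linarith)

lemma l1_helper_le (a b : ℝ) : |a+b| + |a-b| ≤ 2*(|a|+|b|) := by
  rcases abs_cases a with ⟨h1,_⟩|⟨h1,_⟩ <;> rcases abs_cases b with ⟨h2,_⟩|⟨h2,_⟩ <;>
    rcases abs_cases (a+b) with ⟨h3,_⟩|⟨h3,_⟩ <;> rcases abs_cases (a-b) with ⟨h4,_⟩|⟨h4,_⟩ <;>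
    linarith


/-- Any linear map on `ℝⁿ` preserving the ℓ₁-norm is a signed coordinate
permutation: it sends each standard basis vector to a signed standard basis
vector. -/
theorem l1_isometry_is_signed_perm (n : ℕ) (hn : 0 < n)
    (A : (Fin n → ℝ) →ₗ[ℝ] (Fin n → ℝ))
    (hA : ∀ x : Fin n → ℝ, ∑ i, |A x i| = ∑ i, |x i|) :
    ∃ (σ : Equiv.Perm (Fin n)) (ε : Fin n → ℝ),
      (∀ i, ε i = 1 ∨ ε i = -1) ∧
      ∀ j : Fin n, A (Pi.single j 1) = ε j • (Pi.single (σ j) 1 : Fin n → ℝ) := by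
  classical
  set v : Fin n → Fin n → ℝ := fun j => A (Pi.single j 1) with hv
  -- norm of each image is 1
  have hsingle : ∀ j : Fin n, ∑ i, |Pi.single j (1:ℝ) i| = 1 := by
    intro j; simp [Pi.single_apply, apply_ite abs]
  have hnorm : ∀ j, ∑ i, |v j i| = 1 := by
    intro j; rw [hv]; rw [hA]; exact hsingle j
  -- disjoint supports
  have hdisj : ∀ j k : Fin n, j ≠ k → ∀ i, v j i = 0 ∨ v k i = 0 := by
    intro j k hjk i
    have hsum : ∑ i, |((Pi.single j 1 + Pi.single k 1 : Fin n → ℝ)) i| = 2 := by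
      have hpt : ∀ i, |((Pi.single j 1 + Pi.single k 1 : Fin n → ℝ)) i|
          = (Pi.single j 1 : Fin n → ℝ) i + (Pi.single k 1 : Fin n → ℝ) i := by
        intro i
        by_cases hij : i = j <;> by_cases hik : i = k <;> simp_all [Pi.single_apply]
      rw [Finset.sum_congr rfl fun i _ => hpt i, Finset.sum_add_distrib]
      simp [Pi.single_apply]
      norm_num
    have hdiff : ∑ i, |((Pi.single j 1 - Pi.single k 1 : Fin n → ℝ)) i| = 2 := by
      have hpt : ∀ i, |((Pi.single j 1 - Pi.single k 1 : Fin n → ℝ)) i|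
          = (Pi.single j 1 : Fin n → ℝ) i + (Pi.single k 1 : Fin n → ℝ) i := by
        intro i
        by_cases hij : i = j <;> by_cases hik : i = k <;> simp_all [Pi.single_apply]
      rw [Finset.sum_congr rfl fun i _ => hpt i, Finset.sum_add_distrib]
      simp [Pi.single_apply]
      norm_num
    have h4 : ∑ i, (|v j i + v k i| + |v j i - v k i|) = 4 := by
      have e1 : ∑ i, |v j i + v k i| = 2 := by
        have := hA (Pi.single j 1 + Pi.single k 1)
        rw [hsum] at this
        simpa [hv, map_add, Pi.add_apply] using this
      have e2 : ∑ i, |v j i - v k i| = 2 := by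
        have := hA (Pi.single j 1 - Pi.single k 1)
        rw [hdiff] at this
        simpa [hv, map_sub, Pi.sub_apply] using this
      rw [Finset.sum_add_distrib, e1, e2]; norm_num
    have h2 : ∑ i, 2*(|v j i| + |v k i|) = 4 := by
      rw [← Finset.mul_sum, Finset.sum_add_distrib, hnorm j, hnorm k]; norm_num
    have heq : ∀ i ∈ Finset.univ,
        (2*(|v j i| + |v k i|) - (|v j i + v k i| + |v j i - v k i|)) = 0 := by
      apply (Finset.sum_eq_zero_iff_of_nonneg ?_).mp
      · rw [Finset.sum_sub_distrib, h4, h2]; norm_num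
      · intro i _
        have := l1_helper_le (v j i) (v k i)
        linarith
    have := heq i (Finset.mem_univ i)
    exact l1_helper_zero (v j i) (v k i) (by linarith)
  -- supports
  set S : Fin n → Finset (Fin n) := fun j => Finset.univ.filter (fun i => v j i ≠ 0) with hS
  have hSne : ∀ j, (S j).Nonempty := by
    intro j
    by_contra h
    rw [Finset.not_nonempty_iff_eq_empty] at h
    have hall : ∀ i, v j i = 0 := by
      intro i
      by_contra hi
      have : i ∈ S j := by simp [hS, hi]
      simp [h] at this
    have : ∑ i, |v j i| = 0 := by
      apply Finset.sum_eq_zero; intro i _; simp [hall i]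
    rw [hnorm j] at this; norm_num at this
  have hSdisj : ∀ j ∈ Finset.univ, ∀ k ∈ Finset.univ, j ≠ k → Disjoint (S j) (S k) := by
    intro j _ k _ hjk
    rw [Finset.disjoint_left]
    intro i hij hik
    simp only [hS, Finset.mem_filter] at hij hik
    rcases hdisj j k hjk i with h | h
    · exact hij.2 h
    · exact hik.2 h
  have hcard : ∀ j, (S j).card = 1 := by
    have hle : ∑ j, (S j).card ≤ n := by
      rw [← Finset.card_biUnion hSdisj]
      calc (Finset.univ.biUnion S).card ≤ (Finset.univ : Finset (Fin n)).card :=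
            Finset.card_le_card (Finset.subset_univ _)
        _ = n := by simp
    intro j
    by_contra h
    have hj2 : 2 ≤ (S j).card := by
      rcases Nat.lt_or_ge (S j).card 2 with h2 | h2
      · interval_cases hc : (S j).card
        · exact absurd (Finset.card_eq_zero.mp hc ▸ (hSne j)) (by simp)
        · exact absurd (h rfl) not_false
      · exact h2
    have h1le : ∀ k ∈ Finset.univ, 1 ≤ (S k).card := fun k _ => (hSne k).card_pos
    have : n < ∑ j, (S j).card := by
      calc n = ∑ _j : Fin n, 1 := by simp
        _ < ∑ j, (S j).card := by
            apply Finset.sum_lt_sum h1le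
            exact ⟨j, Finset.mem_univ j, by omega⟩
    omega
  choose σ' hσ' using fun j => Finset.card_eq_one.mp (hcard j)
  have hmem : ∀ j i, v j i ≠ 0 ↔ i = σ' j := by
    intro j i
    constructor
    · intro h
      have : i ∈ S j := by simp [hS, h]
      rw [hσ' j] at this; simpa using this
    · intro h
      have : σ' j ∈ S j := by rw [hσ' j]; simp
      simp only [hS, Finset.mem_filter] at this
      rw [h]; exact this.2
  have hinj : Function.Injective σ' := by
    intro j k h
    by_contra hjk
    have h1 : v j (σ' j) ≠ 0 := (hmem j (σ' j)).mpr rfl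
    have h2 : v k (σ' j) ≠ 0 := (hmem k (σ' j)).mpr (by rw [h])
    rcases hdisj j k hjk (σ' j) with hz | hz
    · exact h1 hz
    · exact h2 hz
  let σ : Equiv.Perm (Fin n) := Equiv.ofBijective σ' (Finite.injective_iff_bijective.mp hinj)
  set ε : Fin n → ℝ := fun j => v j (σ' j) with hε
  have habs : ∀ j, |ε j| = 1 := by
    intro j
    have : ∑ i, |v j i| = |v j (σ' j)| := by
      apply Finset.sum_eq_single (σ' j)
      · intro i _ hi
        have : v j i = 0 := by
          by_contra hc
          exact hi ((hmem j i).mp hc)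
        simp [this]
      · intro h; exact absurd (Finset.mem_univ _) h
    rw [hnorm j] at this
    exact this.symm
  refine ⟨σ, ε, fun j => (abs_eq (by norm_num)).mp (habs j), ?_⟩
  intro j
  funext i
  show v j i = (ε j • (Pi.single (σ j) 1 : Fin n → ℝ)) i
  by_cases hi : i = σ' j
  · subst hi
    simp only [Pi.smul_apply, smul_eq_mul]
    have : σ j = σ' j := rfl
    rw [this, Pi.single_eq_same]
    simp [hε]
  · have hz : v j i = 0 := by
      by_contra hc
      exact hi ((hmem j i).mp hc)
    have : σ j = σ' j := rfl
    simp only [Pi.smul_apply, smul_eq_mul, this, Pi.single_apply, if_neg hi]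
    simp [hz, Pi.single_apply, hi]
end
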